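/- Let F be a class of languages (assigning to each alphabet α a set F(α) of languages over α) that is closed under inverse homomorphisms: for every monoid homomorphism φ : β* → α* between free monoids and every L ∈ F(α), the preimage φ⁻¹(L) belongs to F(β). Let G be a group, X a finite alphabet, and π : X* → G a surjective monoid homomorphism such that the word problem π⁻¹(1) belongs to F(X). Then for every finite alphabet X' and every surjective monoid homomorphism π' : X'* → G, the word problem π'⁻¹(1) belongs to F(X'). -/

import Mathlib

/-- The word problem of a group `G` with respect to a monoid homomorphism `π`
from a free monoid, as a language: words (lists of letters) mapping to `1`. -/
def wordProblem {α : Type} {G : Type} [Group G] (π : FreeMonoid α →* G) :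
    Language α :=
  {w : List α | π (FreeMonoid.ofList w) = 1}

/-- If a class of languages `F` is closed under inverse homomorphisms of free
monoids, then having word problem in `F` is independent of the chosen finite
generating set (presentation): if some surjection `π : X* → G` has word problem
in `F(X)`, then every surjection `π' : X'* → G` has word problem in `F(X')`. -/
theorem wordProblem_independent_of_presentation
    (F : ∀ α : Type, Set (Language α))
    (hinv : ∀ (α β : Type) (φ : FreeMonoid β →* FreeMonoid α) (L : Language α),
      L ∈ F α →
      ({w : List β | FreeMonoid.toList (φ (FreeMonoid.ofList w)) ∈ L} :
        Language β) ∈ F β)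
    (G : Type) [Group G] (X : Type) [Fintype X]
    (π : FreeMonoid X →* G) (hπ : Function.Surjective π)
    (hWP : wordProblem π ∈ F X)
    (X' : Type) [Fintype X'] (π' : FreeMonoid X' →* G)
    (hπ' : Function.Surjective π') :
    wordProblem π' ∈ F X' := by
  choose f hf using fun x' : X' => hπ (π' (FreeMonoid.of x'))
  set φ : FreeMonoid X' →* FreeMonoid X := FreeMonoid.lift f with hφ
  have hcomp : π.comp φ = π' := by
    apply FreeMonoid.hom_eq
    intro x'
    simp [hφ, hf]
  have key : ∀ w : List X', π (φ (FreeMonoid.ofList w)) = π' (FreeMonoid.ofList w) :=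
    fun w => DFunLike.congr_fun hcomp _
  have := hinv X X' φ (wordProblem π) hWP
  refine (congrArg (· ∈ F X') ?_).mpr this
  ext w
  show π' (FreeMonoid.ofList w) = 1 ↔ π (FreeMonoid.ofList (FreeMonoid.toList (φ (FreeMonoid.ofList w)))) = 1
  rw [FreeMonoid.ofList_toList, key w]
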